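/- Let d, k ≥ 1, let Σ be a symmetric positive-definite d × d real matrix with centered Gaussian density p_Σ on ℝ^d, let g : ℝ^d → ℝ be bounded and measurable, and let m : ℝ^k → ℝ^d be continuously differentiable. Then the function F(x) := ∫_{ℝ^d} g(m(x) + y) p_Σ(y) dy is differentiable on ℝ^k, and for every j ∈ {1,…,k}, ∂_{x_j} F(x) = Σ_{i=1}^d ∂_{x_j} m^i(x) · ∫_{ℝ^d} g(m(x) + y) (Σ^{−1} y)_i p_Σ(y) dy. -/

import Mathlib

open scoped BigOperators
open MeasureTheory Real Matrix

/-- Density `p_Σ(x) = (2π)^{−d/2} (det Σ)^{−1/2} exp(−⟨x, Σ⁻¹ x⟩/2)` of the centered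
Gaussian measure on `ℝ^d` with covariance matrix `Σ`. -/
noncomputable def gaussDensity {d : ℕ} (S : Matrix (Fin d) (Fin d) ℝ)
    (x : Fin d → ℝ) : ℝ :=
  (Real.sqrt ((2 * Real.pi) ^ d * S.det))⁻¹
    * Real.exp (-(∑ i, x i * (S⁻¹).mulVec x i) / 2)

/-- differentiation under Gaussian smoothing: for bounded measurable `g`
and `C¹` mean function `m`, `F(x) = ∫ g(m(x)+y) p_Σ(y) dy` is differentiable and
`∂_{x_j} F(x) = Σ_i ∂_{x_j} m^i(x) ∫ g(m(x)+y) (Σ⁻¹ y)_i p_Σ(y) dy`. -/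

example {d : ℕ} (f : (Fin d → ℝ) → ℝ) (z : Fin d → ℝ) :
    ∫ u, f (u - z) = ∫ u, f u := integral_sub_right_eq_self f z

noncomputable def dotCLM {d : ℕ} (w : Fin d → ℝ) : (Fin d → ℝ) →L[ℝ] ℝ :=
  ∑ i, w i • ContinuousLinearMap.proj i

@[simp] lemma dotCLM_apply {d : ℕ} (w v : Fin d → ℝ) :
    dotCLM w v = ∑ i, w i * v i := by
  simp [dotCLM, ContinuousLinearMap.sum_apply]

lemma dotCLM_norm_le {d : ℕ} (w : Fin d → ℝ) : ‖dotCLM w‖ ≤ ∑ i, |w i| := by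
  refine ContinuousLinearMap.opNorm_le_bound _ (Finset.sum_nonneg fun i _ => abs_nonneg _) ?_
  intro v
  rw [dotCLM_apply, Finset.sum_mul]
  refine (Finset.abs_sum_le_sum_abs _ _).trans (Finset.sum_le_sum fun i _ => ?_)
  rw [abs_mul]
  simpa using mul_le_mul_of_nonneg_left ((Real.norm_eq_abs (v i)) ▸ norm_le_pi_norm v i) (abs_nonneg (w i))

lemma quad_hasFDerivAt {d : ℕ} (M : Matrix (Fin d) (Fin d) ℝ) (hM : Mᵀ = M) (y : Fin d → ℝ) :
    HasFDerivAt (fun y : Fin d → ℝ => ∑ i, y i * M.mulVec y i)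
      ((2:ℝ) • dotCLM (M.mulVec y)) y := by
  have h2 : ∀ i, HasFDerivAt (fun y : Fin d → ℝ => M.mulVec y i) (dotCLM (M i)) y := by
    intro i
    have : (fun y : Fin d → ℝ => M.mulVec y i) = fun y => dotCLM (M i) y := by
      funext v; simp [Matrix.mulVec, dotProduct]
    rw [this]
    exact (dotCLM (M i)).hasFDerivAt
  have h := HasFDerivAt.sum (u := Finset.univ)
    (fun i _ => ((ContinuousLinearMap.proj (R := ℝ) (φ := fun _ : Fin d => ℝ) i).hasFDerivAt
        (x := y)).mul (h2 i))
  convert h using 1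
  case e'_4 | e'_5 | e'_6 | e'_8 | e'_9 => rfl
  case e'_11 => funext v; simp [Finset.sum_apply]
  ext v
  simp only [ContinuousLinearMap.smul_apply, ContinuousLinearMap.sum_apply,
    ContinuousLinearMap.add_apply, ContinuousLinearMap.proj_apply, dotCLM_apply, smul_eq_mul]
  have hsymm : ∀ i j, M i j = M j i := fun i j => by
    simpa using congrFun (congrFun hM.symm i) j
  simp only [Matrix.mulVec, dotProduct]
  rw [Finset.sum_add_distrib]
  have key : ∑ i, y i * ∑ j, M i j * v j = ∑ i, (∑ j, M i j * y j) * v i := by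
    simp_rw [Finset.mul_sum, Finset.sum_mul]
    rw [Finset.sum_comm]
    exact Finset.sum_congr rfl fun i _ => Finset.sum_congr rfl fun j _ => by
      rw [hsymm i j]; ring
  rw [key, two_mul]


lemma inv_transpose_eq {d : ℕ} {S : Matrix (Fin d) (Fin d) ℝ} (hS : S.PosDef) :
    (S⁻¹)ᵀ = S⁻¹ := by
  have h : (S⁻¹).IsHermitian := hS.isHermitian.inv
  simpa [Matrix.IsHermitian, Matrix.conjTranspose_eq_transpose_of_trivial] using h

lemma gaussDensity_hasFDerivAt {d : ℕ} (S : Matrix (Fin d) (Fin d) ℝ) (hS : S.PosDef)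
    (y : Fin d → ℝ) :
    HasFDerivAt (gaussDensity S) (-(gaussDensity S y) • dotCLM ((S⁻¹).mulVec y)) y := by
  set c : ℝ := (Real.sqrt ((2 * Real.pi) ^ d * S.det))⁻¹ with hc
  have hq := quad_hasFDerivAt (S⁻¹) (inv_transpose_eq hS) y
  have h1 : HasFDerivAt (fun y : Fin d → ℝ =>
      c * Real.exp ((-(1/2) : ℝ) * ∑ i, y i * (S⁻¹).mulVec y i))
      (c • (Real.exp ((-(1/2) : ℝ) * ∑ i, y i * (S⁻¹).mulVec y i) •
        ((-(1/2) : ℝ) • ((2:ℝ) • dotCLM ((S⁻¹).mulVec y))))) y :=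
    ((hq.const_mul (-(1/2))).exp).const_mul c
  have hfun : gaussDensity S = fun y : Fin d → ℝ =>
      c * Real.exp ((-(1/2) : ℝ) * ∑ i, y i * (S⁻¹).mulVec y i) := by
    funext v
    have : (-(∑ i, v i * (S⁻¹).mulVec v i)) / 2
        = (-(1/2) : ℝ) * ∑ i, v i * (S⁻¹).mulVec v i := by ring
    rw [gaussDensity, this]
  rw [hfun]
  convert h1 using 1
  rw [smul_smul, smul_smul, smul_smul]
  congr 1
  simp [gaussDensity, hc]

lemma quad_continuous {d : ℕ} (M : Matrix (Fin d) (Fin d) ℝ) :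
    Continuous fun y : Fin d → ℝ => ∑ i, y i * M.mulVec y i := by
  apply continuous_finset_sum
  intro i _
  refine (continuous_apply i).mul ?_
  simp only [Matrix.mulVec, dotProduct]
  exact continuous_finset_sum _ fun j _ => continuous_const.mul (continuous_apply j)

lemma posdef_quad_lower {d : ℕ} (hd : 1 ≤ d) {M : Matrix (Fin d) (Fin d) ℝ}
    (hM : M.PosDef) :
    ∃ μ > 0, ∀ y : Fin d → ℝ, μ * ‖y‖^2 ≤ ∑ i, y i * M.mulVec y i := by
  haveI : Nonempty (Fin d) := ⟨⟨0, hd⟩⟩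
  have hq_cont := quad_continuous M
  have hsph : (Metric.sphere (0 : Fin d → ℝ) 1).Nonempty :=
    NormedSpace.sphere_nonempty.mpr zero_le_one
  obtain ⟨y₀, hy₀, hmin⟩ := (isCompact_sphere (0 : Fin d → ℝ) 1).exists_isMinOn hsph
    hq_cont.continuousOn
  have hy₀norm : ‖y₀‖ = 1 := by simpa using hy₀
  have hy₀ne : y₀ ≠ 0 := by
    intro h; rw [h, norm_zero] at hy₀norm; exact zero_ne_one hy₀norm
  have hμpos : 0 < ∑ i, y₀ i * M.mulVec y₀ i := by
    have := hM.dotProduct_mulVec_pos hy₀ne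
    simpa [dotProduct] using this
  refine ⟨_, hμpos, fun y => ?_⟩
  rcases eq_or_ne y 0 with rfl | hy
  · simp
  · have hr : (0:ℝ) < ‖y‖ := norm_pos_iff.mpr hy
    have hw : ‖(‖y‖⁻¹ • y)‖ = 1 := by
      rw [norm_smul, norm_inv, norm_norm, inv_mul_cancel₀ hr.ne']
    have hmem : (‖y‖⁻¹ • y) ∈ Metric.sphere (0 : Fin d → ℝ) 1 := by
      simpa using hw
    have hscale : ∑ i, (‖y‖⁻¹ • y) i * M.mulVec (‖y‖⁻¹ • y) i
        = ‖y‖⁻¹^2 * ∑ i, y i * M.mulVec y i := by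
      rw [Matrix.mulVec_smul, Finset.mul_sum]
      exact Finset.sum_congr rfl fun i _ => by
        simp [Pi.smul_apply, smul_eq_mul]; ring
    have h : (∑ i, y₀ i * M.mulVec y₀ i) ≤ ‖y‖⁻¹^2 * ∑ i, y i * M.mulVec y i := by
      rw [← hscale]; exact hmin hmem
    have h2 : (∑ i, y₀ i * M.mulVec y₀ i) * ‖y‖^2 ≤ ‖y‖⁻¹^2 * (∑ i, y i * M.mulVec y i) * ‖y‖^2 :=
      mul_le_mul_of_nonneg_right h (by positivity)
    calc (∑ i, y₀ i * M.mulVec y₀ i) * ‖y‖^2 ≤ _ := h2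
      _ = ∑ i, y i * M.mulVec y i := by
          field_simp

lemma integrable_gauss {d : ℕ} (hd : 1 ≤ d) {b : ℝ} (hb : 0 < b) :
    Integrable (fun y : Fin d → ℝ => Real.exp (-b * ‖y‖^2)) := by
  have hd0 : (0:ℝ) < (d:ℝ) := by exact_mod_cast hd
  have hbd : 0 < b / d := div_pos hb hd0
  have hprod : Integrable (fun y : Fin d → ℝ => ∏ i, Real.exp (-(b/d) * (y i)^2)) :=
    Integrable.fintype_prod (f := fun (_ : Fin d) (t : ℝ) => Real.exp (-(b/d) * t^2))
      (fun _ => integrable_exp_neg_mul_sq hbd)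
  refine hprod.mono' ?_ ?_
  · exact (Real.continuous_exp.comp
      ((continuous_const.mul (continuous_norm.pow 2)))).aestronglyMeasurable
  · filter_upwards with y
    rw [Real.norm_eq_abs, abs_of_pos (Real.exp_pos _), ← Real.exp_sum]
    apply Real.exp_le_exp.mpr
    have h1 : ∑ i, (y i)^2 ≤ (d:ℝ) * ‖y‖^2 := by
      calc ∑ i, (y i)^2 ≤ ∑ _i : Fin d, ‖y‖^2 :=
            Finset.sum_le_sum fun i _ => by
              rw [← sq_abs]
              exact pow_le_pow_left₀ (abs_nonneg _)
                ((Real.norm_eq_abs (y i)) ▸ norm_le_pi_norm y i) 2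
        _ = (d:ℝ) * ‖y‖^2 := by simp [Finset.sum_const, Finset.card_univ, nsmul_eq_mul]
    have h2 : (-(b/d)) * ((d:ℝ) * ‖y‖^2) ≤ (-(b/d)) * ∑ i, (y i)^2 :=
      mul_le_mul_of_nonpos_left h1 (neg_nonpos.mpr hbd.le)
    calc -b * ‖y‖^2 = (-(b/d)) * ((d:ℝ) * ‖y‖^2) := by field_simp
      _ ≤ (-(b/d)) * ∑ i, (y i)^2 := h2
      _ = ∑ i, -(b/d) * (y i)^2 := by rw [Finset.mul_sum]

lemma mul_exp_neg_le_one {x : ℝ} (hx : 0 ≤ x) : x * Real.exp (-x) ≤ 1 := by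
  have h : x * Real.exp (-x) = x / Real.exp x := by rw [Real.exp_neg]; ring
  rw [h, div_le_one (Real.exp_pos x)]
  linarith [Real.add_one_le_exp x]

lemma scalar_bound {μ R r t : ℝ} (hμ : 0 < μ) (hR : 0 ≤ R) (hr : 0 ≤ r) (ht : 0 ≤ t)
    (hlo : r - R ≤ t) (thi : t ≤ r + R) :
    t * Real.exp (-(μ/2) * t^2) ≤
      (R + 1 + 8/μ) * Real.exp ((μ/2) * R^2) * Real.exp (-(μ/8) * r^2) := by
  set E1 := Real.exp (-(μ/8) * r^2) with hE1
  have hE1pos : 0 < E1 := Real.exp_pos _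
  have hE1le : E1 ≤ 1 := by
    rw [hE1]
    calc Real.exp (-(μ/8) * r^2) ≤ Real.exp 0 :=
          Real.exp_le_exp.mpr (by nlinarith [sq_nonneg r])
      _ = 1 := Real.exp_zero
  have hsq : r^2/2 - R^2 ≤ t^2 := by
    rcases le_or_gt r R with h | h
    · nlinarith [sq_nonneg t, mul_self_le_mul_self hr h]
    · have h0 : (0:ℝ) ≤ r - R := by linarith
      have := mul_self_le_mul_self h0 hlo
      nlinarith [sq_nonneg (r - 2*R)]
  have hexp : Real.exp (-(μ/2) * t^2) ≤ Real.exp ((μ/2)*R^2) * (E1 * E1) := by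
    rw [hE1, ← Real.exp_add, ← Real.exp_add]
    apply Real.exp_le_exp.mpr
    nlinarith [mul_le_mul_of_nonneg_left hsq (le_of_lt (half_pos hμ))]
  have hr2E1 : r^2 * E1 ≤ 8/μ := by
    have h1 : ((μ/8) * r^2) * Real.exp (-((μ/8) * r^2)) ≤ 1 :=
      mul_exp_neg_le_one (by positivity)
    have h2 : E1 = Real.exp (-((μ/8) * r^2)) := by rw [hE1, neg_mul]
    rw [h2]
    have h3 : r^2 * Real.exp (-((μ/8) * r^2))
        = (8/μ) * ((μ/8) * r^2 * Real.exp (-((μ/8) * r^2))) := by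
      field_simp
    rw [h3]
    calc (8/μ) * ((μ/8) * r^2 * Real.exp (-((μ/8) * r^2))) ≤ (8/μ) * 1 :=
          mul_le_mul_of_nonneg_left h1 (by positivity)
      _ = 8/μ := mul_one _
  have key : (r + R) * E1 ≤ R + 1 + 8/μ := by
    have h3 : r * E1 ≤ (1 + r^2) * E1 :=
      mul_le_mul_of_nonneg_right (by nlinarith [sq_nonneg (r-1)]) hE1pos.le
    have h4 : R * E1 ≤ R := mul_le_of_le_one_right hR hE1le
    nlinarith [hE1le, hr2E1]
  calc t * Real.exp (-(μ/2)*t^2)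
      ≤ (r+R) * (Real.exp ((μ/2)*R^2) * (E1*E1)) :=
        mul_le_mul thi hexp (Real.exp_pos _).le (by linarith)
    _ = Real.exp ((μ/2)*R^2) * (((r+R)*E1) * E1) := by ring
    _ ≤ Real.exp ((μ/2)*R^2) * ((R+1+8/μ) * E1) := by
        exact mul_le_mul_of_nonneg_left
          (mul_le_mul_of_nonneg_right key hE1pos.le) (Real.exp_pos _).le
    _ = (R+1+8/μ) * Real.exp ((μ/2)*R^2) * E1 := by ring

lemma mulVec_abs_sum_le {d : ℕ} (M : Matrix (Fin d) (Fin d) ℝ) (y : Fin d → ℝ) :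
    ∑ i, |M.mulVec y i| ≤ (∑ i, ∑ j, |M i j|) * ‖y‖ := by
  rw [Finset.sum_mul]
  refine Finset.sum_le_sum fun i _ => ?_
  rw [Finset.sum_mul]
  simp only [Matrix.mulVec, dotProduct]
  refine (Finset.abs_sum_le_sum_abs _ _).trans (Finset.sum_le_sum fun j _ => ?_)
  rw [abs_mul]
  exact mul_le_mul_of_nonneg_left ((Real.norm_eq_abs (y j)) ▸ norm_le_pi_norm y j) (abs_nonneg _)

lemma grad_continuous {d : ℕ} (S : Matrix (Fin d) (Fin d) ℝ) :
    Continuous (fun y : Fin d → ℝ =>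
      gaussDensity S y • dotCLM ((S⁻¹).mulVec y)) := by
  have hp : Continuous (gaussDensity S) := by
    unfold gaussDensity
    exact continuous_const.mul
      (Real.continuous_exp.comp (((quad_continuous (S⁻¹)).neg).div_const 2))
  refine hp.smul ?_
  unfold dotCLM
  apply continuous_finset_sum
  intro i _
  refine Continuous.smul (f := fun y : Fin d → ℝ => ((S⁻¹).mulVec y) i) ?_ continuous_const
  simp only [Matrix.mulVec, dotProduct]
  exact continuous_finset_sum _ fun j _ => continuous_const.mul (continuous_apply j)

lemma gaussDensity_continuous {d : ℕ} (S : Matrix (Fin d) (Fin d) ℝ) :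
    Continuous (gaussDensity S) := by
  unfold gaussDensity
  exact continuous_const.mul
    (Real.continuous_exp.comp (((quad_continuous (S⁻¹)).neg).div_const 2))

set_option maxHeartbeats 1000000 in
lemma core {d : ℕ} (hd : 1 ≤ d) (S : Matrix (Fin d) (Fin d) ℝ) (hS : S.PosDef)
    (g : (Fin d → ℝ) → ℝ) (hgm : Measurable g) (C : ℝ) (hgb : ∀ x, |g x| ≤ C)
    (z₀ : Fin d → ℝ) :
    HasFDerivAt (fun z : Fin d → ℝ => ∫ u, g u * gaussDensity S (u - z))
      (∫ u, g u • (gaussDensity S (u - z₀) • dotCLM ((S⁻¹).mulVec (u - z₀)))) z₀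
    ∧ Integrable (fun u => g u • (gaussDensity S (u - z₀) • dotCLM ((S⁻¹).mulVec (u - z₀))))
    ∧ ∀ i, Integrable (fun y => g (z₀ + y) * (S⁻¹).mulVec y i * gaussDensity S y) := by
  obtain ⟨μ, hμpos, hμ⟩ := posdef_quad_lower hd hS.inv
  set M : Matrix (Fin d) (Fin d) ℝ := S⁻¹ with hM
  set c : ℝ := (Real.sqrt ((2 * Real.pi) ^ d * S.det))⁻¹ with hc
  have hc0 : 0 ≤ c := by positivity
  set K : ℝ := ∑ i, ∑ j, |M i j| with hK
  have hK0 : 0 ≤ K :=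
    Finset.sum_nonneg fun i _ => Finset.sum_nonneg fun j _ => abs_nonneg _
  have hC : 0 ≤ C := le_trans (abs_nonneg _) (hgb 0)
  set R : ℝ := ‖z₀‖ + 1 with hR
  have hR0 : 0 ≤ R := by positivity
  set grad : (Fin d → ℝ) → ((Fin d → ℝ) →L[ℝ] ℝ) :=
    fun y => gaussDensity S y • dotCLM (M.mulVec y) with hgrad
  -- pointwise bounds
  have hp_nonneg : ∀ y : Fin d → ℝ, 0 ≤ gaussDensity S y := by
    intro y; unfold gaussDensity; positivity
  have hp_le : ∀ y : Fin d → ℝ, gaussDensity S y ≤ c * Real.exp (-(μ/2) * ‖y‖^2) := by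
    intro y
    unfold gaussDensity
    rw [← hc]
    refine mul_le_mul_of_nonneg_left (Real.exp_le_exp.mpr ?_) hc0
    have := hμ y
    nlinarith
  have hgrad_le : ∀ y : Fin d → ℝ,
      ‖grad y‖ ≤ (c*K) * (‖y‖ * Real.exp (-(μ/2) * ‖y‖^2)) := by
    intro y
    rw [hgrad]
    rw [norm_smul (gaussDensity S y) (dotCLM (M.mulVec y))]
    rw [Real.norm_eq_abs, abs_of_nonneg (hp_nonneg y)]
    calc gaussDensity S y * ‖dotCLM (M.mulVec y)‖
        ≤ (c * Real.exp (-(μ/2) * ‖y‖^2)) * (K * ‖y‖) := by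
          refine mul_le_mul (hp_le y) ?_ (norm_nonneg _)
            (by positivity)
          exact (dotCLM_norm_le _).trans (mulVec_abs_sum_le M y)
      _ = (c*K) * (‖y‖ * Real.exp (-(μ/2) * ‖y‖^2)) := by ring
  -- the global bound
  set A : ℝ := C * (c * K) * ((R + 1 + 8/μ) * Real.exp ((μ/2) * R^2)) with hA
  have hbound_all : ∀ (u : Fin d → ℝ), ∀ z ∈ Metric.ball z₀ 1,
      ‖g u • grad (u - z)‖ ≤ A * Real.exp (-(μ/8) * ‖u‖^2) := by
    intro u z hz
    have hz' : ‖z‖ ≤ R := by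
      have := norm_sub_norm_le z z₀
      have h2 : ‖z - z₀‖ < 1 := by simpa [dist_eq_norm] using hz
      rw [hR]; linarith [norm_le_norm_add_norm_sub' z z₀]
    have hlo : ‖u‖ - R ≤ ‖u - z‖ := by
      have := norm_sub_norm_le u z
      have h3 : ‖u‖ ≤ ‖u - z‖ + ‖z‖ := by
        calc ‖u‖ = ‖(u - z) + z‖ := by rw [sub_add_cancel]
          _ ≤ ‖u - z‖ + ‖z‖ := norm_add_le _ _
      linarith
    have thi : ‖u - z‖ ≤ ‖u‖ + R := by
      calc ‖u - z‖ ≤ ‖u‖ + ‖z‖ := norm_sub_le _ _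
        _ ≤ ‖u‖ + R := by linarith
    have hsb := scalar_bound hμpos hR0 (norm_nonneg u) (norm_nonneg (u - z)) hlo thi
    rw [norm_smul (g u) (grad (u - z)), Real.norm_eq_abs]
    calc |g u| * ‖grad (u - z)‖
        ≤ C * ((c*K) * (‖u - z‖ * Real.exp (-(μ/2) * ‖u - z‖^2))) :=
          mul_le_mul (hgb u) (hgrad_le (u - z)) (norm_nonneg _) hC
      _ ≤ C * ((c*K) * ((R + 1 + 8/μ) * Real.exp ((μ/2) * R^2) *
            Real.exp (-(μ/8) * ‖u‖^2))) := by
          refine mul_le_mul_of_nonneg_left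
            (mul_le_mul_of_nonneg_left hsb (by positivity)) hC
      _ = A * Real.exp (-(μ/8) * ‖u‖^2) := by rw [hA]; ring
  have hbound_int : Integrable (fun u : Fin d → ℝ => A * Real.exp (-(μ/8) * ‖u‖^2)) :=
    (integrable_gauss hd (by positivity)).const_mul A
  -- differentiability pointwise
  have h_diff : ∀ (u : Fin d → ℝ) (z : Fin d → ℝ),
      HasFDerivAt (fun z => g u * gaussDensity S (u - z)) (g u • grad (u - z)) z := by
    intro u z
    have hsub : HasFDerivAt (fun z : Fin d → ℝ => u - z)
        ((0 : (Fin d → ℝ) →L[ℝ] (Fin d → ℝ)) - ContinuousLinearMap.id ℝ _) z :=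
      (hasFDerivAt_const u z).sub (hasFDerivAt_id z)
    have h1 := (gaussDensity_hasFDerivAt S hS (u - z)).comp z hsub
    have h2 := h1.const_mul (g u)
    convert h2 using 1
    case e'_4 | e'_5 | e'_6 | e'_8 | e'_9 | e'_11 => rfl
    ext v
    rw [hgrad]
    simp only [ContinuousLinearMap.smul_apply, ContinuousLinearMap.comp_apply,
      ContinuousLinearMap.sub_apply, ContinuousLinearMap.zero_apply,
      ContinuousLinearMap.id_apply, ContinuousLinearMap.neg_apply, map_neg,
      zero_sub, smul_eq_mul]
    ring
  -- measurability
  have meas1 : ∀ z : Fin d → ℝ, AEStronglyMeasurable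
      (fun u => g u * gaussDensity S (u - z)) volume := by
    intro z
    exact (hgm.mul (((gaussDensity_continuous S).measurable).comp
      (measurable_id.sub measurable_const))).aestronglyMeasurable
  have measgrad : AEStronglyMeasurable (fun u => g u • grad (u - z₀)) volume := by
    refine (hgm.aestronglyMeasurable).smul ?_
    exact ((grad_continuous S).comp (continuous_id.sub continuous_const)).aestronglyMeasurable
  have hint0 : Integrable (fun u => g u * gaussDensity S (u - z₀)) := by
    have hpint : Integrable (fun y : Fin d → ℝ => gaussDensity S y) := by
      refine (Integrable.const_mul (integrable_gauss hd (by positivity : (0:ℝ) < μ/2)) c).mono'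
        (gaussDensity_continuous S).aestronglyMeasurable ?_
      filter_upwards with y
      rw [Real.norm_eq_abs, abs_of_nonneg (hp_nonneg y)]
      exact hp_le y
    have hptr : Integrable (fun u : Fin d → ℝ => gaussDensity S (u - z₀)) := by
      have := integral_sub_right_eq_self (μ := volume) (gaussDensity S) z₀
      exact hpint.comp_sub_right z₀
    exact hptr.bdd_mul hgm.aestronglyMeasurable
      (Filter.Eventually.of_forall fun u => (Real.norm_eq_abs (g u)) ▸ hgb u)
  have hF'int : Integrable (fun u => g u • grad (u - z₀)) := by
    refine hbound_int.mono' measgrad ?_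
    filter_upwards with u
    exact hbound_all u z₀ (Metric.mem_ball_self one_pos)
  have hmain := hasFDerivAt_integral_of_dominated_of_fderiv_le
    (F := fun z u => g u * gaussDensity S (u - z))
    (F' := fun z u => g u • grad (u - z))
    (bound := fun u => A * Real.exp (-(μ/8) * ‖u‖^2))
    (Metric.ball_mem_nhds z₀ one_pos)
    (Filter.Eventually.of_forall meas1)
    hint0
    measgrad
    (Filter.Eventually.of_forall fun u => fun z hz => hbound_all u z hz)
    hbound_int
    (Filter.Eventually.of_forall fun u => fun z _ => h_diff u z)
  refine ⟨hmain, hF'int, ?_⟩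
  -- integrability of the coordinate integrands
  intro i
  have hmeas : AEStronglyMeasurable
      (fun y : Fin d → ℝ => g (z₀ + y) * M.mulVec y i * gaussDensity S y) volume := by
    refine (((hgm.comp (measurable_const_add z₀)).mul ?_).mul
      (gaussDensity_continuous S).measurable).aestronglyMeasurable
    have : Continuous fun y : Fin d → ℝ => M.mulVec y i := by
      simp only [Matrix.mulVec, dotProduct]
      exact continuous_finset_sum _ fun j _ => continuous_const.mul (continuous_apply j)
    exact this.measurable
  have hA' : Integrable (fun y : Fin d → ℝ =>
      (C * (c*K) * (1 + 8/μ)) * Real.exp (-(μ/8) * ‖y‖^2)) :=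
    (integrable_gauss hd (by positivity)).const_mul _
  refine hA'.mono' hmeas ?_
  filter_upwards with y
  rw [Real.norm_eq_abs, abs_mul, abs_mul]
  have hsb := scalar_bound (μ := μ) (R := 0) (r := ‖y‖) (t := ‖y‖) hμpos le_rfl
    (norm_nonneg y) (norm_nonneg y) (by linarith) (by linarith)
  norm_num at hsb
  have h1 : |M.mulVec y i| ≤ K * ‖y‖ := by
    calc |M.mulVec y i| ≤ ∑ i', |M.mulVec y i'| :=
          Finset.single_le_sum (f := fun i' => |M.mulVec y i'|) (fun i' _ => abs_nonneg _) (Finset.mem_univ i)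
      _ ≤ K * ‖y‖ := mulVec_abs_sum_le M y
  have h2 : |gaussDensity S y| ≤ c * Real.exp (-(μ/2) * ‖y‖^2) := by
    rw [abs_of_nonneg (hp_nonneg y)]; exact hp_le y
  calc |g (z₀ + y)| * |M.mulVec y i| * |gaussDensity S y|
      ≤ C * (K * ‖y‖) * (c * Real.exp (-(μ/2) * ‖y‖^2)) := by
        refine mul_le_mul (mul_le_mul (hgb _) h1 (abs_nonneg _) hC) h2 (abs_nonneg _) ?_
        positivity
    _ = C * (c*K) * (‖y‖ * Real.exp (-(μ/2) * ‖y‖^2)) := by ring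
    _ ≤ C * (c*K) * ((1 + 8/μ) * Real.exp (-(μ/8) * ‖y‖^2)) := by
        refine mul_le_mul_of_nonneg_left ?_ (by positivity)
        calc ‖y‖ * Real.exp (-(μ/2) * ‖y‖^2) = ‖y‖ * Real.exp (-(μ/2 * ‖y‖^2)) := by
              rw [neg_mul]
          _ ≤ (1 + 8/μ) * Real.exp (-(μ/8 * ‖y‖^2)) := hsb
          _ = (1 + 8/μ) * Real.exp (-(μ/8) * ‖y‖^2) := by rw [neg_mul]
    _ = (C * (c*K) * (1 + 8/μ)) * Real.exp (-(μ/8) * ‖y‖^2) := by ring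

set_option maxHeartbeats 1000000 in
theorem gaussian_smoothing_differentiable {d k : ℕ} (hd : 1 ≤ d) (hk : 1 ≤ k)
    (S : Matrix (Fin d) (Fin d) ℝ) (hS : S.PosDef)
    (g : (Fin d → ℝ) → ℝ) (hgm : Measurable g) (C : ℝ) (hgb : ∀ x, |g x| ≤ C)
    (m : (Fin k → ℝ) → (Fin d → ℝ)) (hm : ContDiff ℝ 1 m) :
    Differentiable ℝ (fun x : Fin k → ℝ =>
        ∫ y : Fin d → ℝ, g (m x + y) * gaussDensity S y)
    ∧ ∀ (x : Fin k → ℝ) (j : Fin k),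
        fderiv ℝ (fun x : Fin k → ℝ =>
            ∫ y : Fin d → ℝ, g (m x + y) * gaussDensity S y) x (Pi.single j 1)
          = ∑ i, fderiv ℝ (fun x => m x i) x (Pi.single j 1)
              * ∫ y : Fin d → ℝ, g (m x + y) * (S⁻¹).mulVec y i * gaussDensity S y := by
  have hφz : ∀ z : Fin d → ℝ, (∫ y : Fin d → ℝ, g (z + y) * gaussDensity S y)
      = ∫ u, g u * gaussDensity S (u - z) := by
    intro z
    rw [← integral_sub_right_eq_self (fun y => g (z + y) * gaussDensity S y) z]
    congr 1
    funext u
    have h : z + (u - z) = u := by abel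
    rw [h]
  have hFeq : (fun x : Fin k → ℝ => ∫ y : Fin d → ℝ, g (m x + y) * gaussDensity S y)
      = fun x => ∫ u, g u * gaussDensity S (u - m x) := by
    funext x; exact hφz (m x)
  have hmd : ∀ x, HasFDerivAt m (fderiv ℝ m x) x := fun x =>
    ((hm.differentiable one_ne_zero) x).hasFDerivAt
  have hcore := fun z => core hd S hS g hgm C hgb z
  have hcomp : ∀ x, HasFDerivAt (fun x : Fin k → ℝ => ∫ u, g u * gaussDensity S (u - m x))
      ((∫ u, g u • (gaussDensity S (u - m x) • dotCLM ((S⁻¹).mulVec (u - m x)))).comp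
        (fderiv ℝ m x)) x :=
    fun x => ((hcore (m x)).1).comp x (hmd x)
  constructor
  · rw [hFeq]; exact fun x => (hcomp x).differentiableAt
  · intro x j
    rw [hFeq, (hcomp x).fderiv, ContinuousLinearMap.comp_apply]
    set v : Fin d → ℝ := fderiv ℝ m x (Pi.single j 1) with hv
    rw [ContinuousLinearMap.integral_apply (hcore (m x)).2.1 v]
    have hchg : (fun u => (g u • (gaussDensity S (u - m x) •
          dotCLM ((S⁻¹).mulVec (u - m x)))) v)
        = fun u => (fun y => g (m x + y) * (gaussDensity S y * ∑ i, (S⁻¹).mulVec y i * v i))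
            (u - m x) := by
      funext u
      have h : m x + (u - m x) = u := by abel
      simp only [ContinuousLinearMap.smul_apply, dotCLM_apply, smul_eq_mul, h]
    rw [hchg, integral_sub_right_eq_self
      (fun y => g (m x + y) * (gaussDensity S y * ∑ i, (S⁻¹).mulVec y i * v i)) (m x)]
    have hsum : (fun y => g (m x + y) * (gaussDensity S y * ∑ i, (S⁻¹).mulVec y i * v i))
        = fun y => ∑ i, v i * (g (m x + y) * (S⁻¹).mulVec y i * gaussDensity S y) := by
      funext y
      rw [Finset.mul_sum, Finset.mul_sum]
      exact Finset.sum_congr rfl fun i _ => by ring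
    rw [hsum, integral_finset_sum _ (fun i _ => ((hcore (m x)).2.2 i).const_mul (v i))]
    refine Finset.sum_congr rfl fun i _ => ?_
    rw [MeasureTheory.integral_const_mul]
    congr 1
    have hproj : HasFDerivAt (fun x : Fin k → ℝ => m x i)
        ((ContinuousLinearMap.proj i).comp (fderiv ℝ m x)) x :=
      ((ContinuousLinearMap.proj (R := ℝ) (φ := fun _ : Fin d => ℝ) i).hasFDerivAt).comp x (hmd x)
    rw [hproj.fderiv, ContinuousLinearMap.comp_apply, ContinuousLinearMap.proj_apply, hv]
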